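/- Let A, G be symmetric positive definite n×n matrices such that (1/ξ)·A ⪯ G for some ξ > 0. Then, for any τ ∈ [0,1], any nonzero u ∈ ℝ^n, and G₊ := Broyd_τ(A, G, u), one has ν(A,G,u)² ≥ (1/(1+ξ))·⟨(G−A)G₊⁻¹(G−A)u, u⟩/⟨Gu, u⟩. -/

import Mathlib

open Matrix Finset

/-- The Broyden family update of a Hessian approximation `G` with respect to
the target matrix `A` along direction `u`, parameterized by `τ`. -/
noncomputable def broyd {n : ℕ} (τ : ℝ) (A G : Matrix (Fin n) (Fin n) ℝ) (u : Fin n → ℝ) :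
    Matrix (Fin n) (Fin n) ℝ :=
  if u = 0 then G
  else
    let aUU : ℝ := u ⬝ᵥ A.mulVec u
    let gUU : ℝ := u ⬝ᵥ G.mulVec u
    let agaUU : ℝ := u ⬝ᵥ (A * G⁻¹ * A).mulVec u
    let ρ : ℝ := gUU / aUU
    let φ : ℝ := τ * (aUU / agaUU) / (τ * (aUU / agaUU) + (1 - τ) * ρ)
    φ • (G - aUU⁻¹ • (A * vecMulVec u u * G + G * vecMulVec u u * A)
          + ((ρ + 1) / aUU) • (A * vecMulVec u u * A)) +
    (1 - φ) • (G - gUU⁻¹ • (G * vecMulVec u u * G) + aUU⁻¹ • (A * vecMulVec u u * A))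

/-- `psdLE P Q` (i.e. `P ⪯ Q`) : the matrix `Q - P` is positive semidefinite. -/
def psdLE {n : ℕ} (P Q : Matrix (Fin n) (Fin n) ℝ) : Prop := (Q - P).PosSemidef

/-- The closeness measure ν(A, G, u). -/
noncomputable def nuMeas {n : ℕ} (A G : Matrix (Fin n) (Fin n) ℝ) (u : Fin n → ℝ) : ℝ :=
  Real.sqrt ((u ⬝ᵥ ((G - A) * G⁻¹ * (G - A)).mulVec u) / (u ⬝ᵥ A.mulVec u))

/-- The log-det barrier V(A, G) = ln det (A⁻¹ G). -/
noncomputable def logDetBarrier {n : ℕ} (A G : Matrix (Fin n) (Fin n) ℝ) : ℝ :=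
  Real.log (A⁻¹ * G).det

/-- The augmented log-det barrier ψ(G, A) = ln det (A⁻¹ G) - tr (G⁻¹ (G - A)). -/
noncomputable def psiBarrier {n : ℕ} (G A : Matrix (Fin n) (Fin n) ℝ) : ℝ :=
  Real.log (A⁻¹ * G).det - (G⁻¹ * (G - A)).trace

variable {n : ℕ}

lemma vecMulVec_mulVec' (w v x : Fin n → ℝ) :
    (vecMulVec w v) *ᵥ x = (v ⬝ᵥ x) • w := by
  ext i
  simp [mulVec, dotProduct, vecMulVec_apply, Finset.sum_mul, Finset.mul_sum, mul_comm,
    mul_left_comm]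

lemma dot_mulVec_symm {M : Matrix (Fin n) (Fin n) ℝ} (hM : Mᵀ = M) (x y : Fin n → ℝ) :
    x ⬝ᵥ M *ᵥ y = y ⬝ᵥ M *ᵥ x := by
  rw [dotProduct_mulVec]
  conv_lhs => rw [← hM]
  rw [vecMul_transpose, dotProduct_comm]

lemma herm_transpose {M : Matrix (Fin n) (Fin n) ℝ} (hM : M.IsHermitian) : Mᵀ = M := by
  rw [← conjTranspose_eq_transpose_of_trivial]; exact hM

lemma smul_posSemidef {M : Matrix (Fin n) (Fin n) ℝ} (hM : M.PosSemidef) {c : ℝ} (hc : 0 ≤ c) :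
    (c • M).PosSemidef := by
  refine posSemidef_iff_dotProduct_mulVec.mpr ⟨?_, ?_⟩
  · rw [Matrix.IsHermitian, conjTranspose_smul, hM.1.eq]
    congr 1
  · intro x
    rw [smul_mulVec, dotProduct_smul, smul_eq_mul]
    exact mul_nonneg hc (hM.dotProduct_mulVec_nonneg x)

lemma quad_expand (M : Matrix (Fin n) (Fin n) ℝ) (x z : Fin n → ℝ) (c d : ℝ) :
    (c • x - d • z) ⬝ᵥ M *ᵥ (c • x - d • z) =
      c * c * (x ⬝ᵥ M *ᵥ x) - c * d * (x ⬝ᵥ M *ᵥ z) - c * d * (z ⬝ᵥ M *ᵥ x)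
        + d * d * (z ⬝ᵥ M *ᵥ z) := by
  rw [mulVec_sub, mulVec_smul, mulVec_smul, dotProduct_sub, sub_dotProduct, sub_dotProduct,
    smul_dotProduct, smul_dotProduct, dotProduct_smul, dotProduct_smul, dotProduct_smul,
    dotProduct_smul]
  simp only [smul_eq_mul, smul_dotProduct, dotProduct_smul]
  ring

lemma quad_expand₁ (M : Matrix (Fin n) (Fin n) ℝ) (x z : Fin n → ℝ) (d : ℝ) :
    (x - d • z) ⬝ᵥ M *ᵥ (x - d • z) =
      x ⬝ᵥ M *ᵥ x - d * (x ⬝ᵥ M *ᵥ z) - d * (z ⬝ᵥ M *ᵥ x) + d * d * (z ⬝ᵥ M *ᵥ z) := by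
  rw [mulVec_sub, mulVec_smul, dotProduct_sub, sub_dotProduct, sub_dotProduct]
  simp only [smul_eq_mul, smul_dotProduct, dotProduct_smul]
  ring

lemma triple_mulVec (X Y : Matrix (Fin n) (Fin n) ℝ) (u w x : Fin n → ℝ) :
    (X * vecMulVec u w * Y) *ᵥ x = (w ⬝ᵥ Y *ᵥ x) • (X *ᵥ u) := by
  rw [← mulVec_mulVec, ← mulVec_mulVec, vecMulVec_mulVec', mulVec_smul]

lemma transpose_herm {M : Matrix (Fin n) (Fin n) ℝ} (hM : Mᵀ = M) : M.IsHermitian := by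
  ext i j
  rw [conjTranspose_apply, star_trivial]
  exact congrFun (congrFun hM i) j

lemma quad_bound {M : Matrix (Fin n) (Fin n) ℝ} (hM : M.PosSemidef) {w v : Fin n → ℝ}
    (x : Fin n → ℝ) (hw : M *ᵥ w = v) : 2 * (x ⬝ᵥ v) - x ⬝ᵥ M *ᵥ x ≤ w ⬝ᵥ v := by
  have hsymm : Mᵀ = M := herm_transpose hM.1
  have h := hM.dotProduct_mulVec_nonneg (x - w)
  rw [star_trivial] at h
  have hxw : w ⬝ᵥ M *ᵥ x = x ⬝ᵥ v := by rw [dot_mulVec_symm hsymm, hw]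
  have hxv : x ⬝ᵥ M *ᵥ w = x ⬝ᵥ v := by rw [hw]
  have hwv : w ⬝ᵥ M *ᵥ w = w ⬝ᵥ v := by rw [hw]
  rw [mulVec_sub, sub_dotProduct, dotProduct_sub, dotProduct_sub, hxw, hxv, hwv] at h
  linarith


lemma coreB {a g q ξ : ℝ} (ha : 0 < a) (hg : 0 < g) (hq : 0 < q) (hξ : 0 < ξ)
    (h1 : a ^ 2 ≤ q * g) (h2 : q ≤ ξ * a) (h3 : a ≤ ξ * g) :
    g * g * q + a * g * g - 3 * a * a * g + a * a * a ≤ (1 + ξ) * a * g * (q - 2 * a + g) := by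
  rcases le_or_gt g ((1 + ξ) * a) with h | h
  · nlinarith [mul_nonneg (sub_nonneg.2 h1) (sub_nonneg.2 h),
      mul_nonneg (mul_nonneg hξ.le ha.le) (sq_nonneg (g - a))]
  · have hext : a ≤ (ξ ^ 2 - ξ + 1) * g := by nlinarith [mul_nonneg (sq_nonneg (ξ - 1)) hg.le]
    nlinarith [mul_nonneg (mul_nonneg (sub_nonneg.2 h2) hg.le) (sub_nonneg.2 h.le),
      mul_nonneg (mul_nonneg ha.le ha.le) (sub_nonneg.2 hext)]

lemma coreD {a g q ξ : ℝ} (ha : 0 < a) (hg : 0 < g) (hq : 0 < q) (hξ : 0 < ξ)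
    (h1 : a ^ 2 ≤ q * g) (h2 : q ≤ ξ * a) (h3 : a ≤ ξ * g) :
    g * q * (g - a) + a * a * q - a * a * a ≤ (1 + ξ) * g * q * (q - 2 * a + g) := by
  rcases le_or_gt g ((1 + ξ) * a) with h | h
  · have h4 : a ≤ (1 + ξ) * q := by nlinarith
    nlinarith [mul_nonneg (mul_nonneg hξ.le hq.le) (sq_nonneg (g - a)),
      mul_nonneg (sub_nonneg.2 h1) (sub_nonneg.2 h4)]
  · rcases le_or_gt 1 (2 * ξ) with hx | hx
    · have hc : 0 ≤ ξ * g * g - (2 * ξ + 1) * a * g - a * a + 2 * (1 + ξ) * a * a := by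
        nlinarith [sq_nonneg (2 * ξ * g - (2 * ξ + 1) * a), mul_nonneg (mul_nonneg ha.le ha.le)
          (by nlinarith : (0:ℝ) ≤ 4 * ξ ^ 2 - 1)]
      nlinarith [mul_nonneg (mul_nonneg (by linarith : (0:ℝ) ≤ 1 + ξ) (sq_nonneg q))
          (sub_nonneg.2 h.le),
        mul_nonneg hq.le hc, mul_nonneg ha.le (sq_nonneg ((1 + ξ) * q - a))]
    · have hg2 : 2 * a ≤ g := by nlinarith
      have hc2 : 0 ≤ ξ * g * g - (2 * ξ + 1) * a * g + 2 * a * a := by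
        nlinarith [mul_nonneg (sub_nonneg.2 h3) (sub_nonneg.2 hg2)]
      have h3a : 3 * a ≤ (1 + ξ) * g := by
        nlinarith [mul_nonneg hg.le (by linarith : (0:ℝ) ≤ 1 - 2 * ξ)]
      nlinarith [mul_nonneg (sub_nonneg.2 h3a) (sq_nonneg q), mul_nonneg hq.le hc2,
        mul_nonneg ha.le (by nlinarith [sq_nonneg (2 * q - a), sq_nonneg a] :
          (0:ℝ) ≤ 3 * q ^ 2 - 3 * a * q + a ^ 2)]

set_option maxHeartbeats 4000000 in
theorem nu_change_of_metric {n : ℕ} (hn : 1 ≤ n)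
    (A G : Matrix (Fin n) (Fin n) ℝ) (hA : A.PosDef) (hG : G.PosDef)
    (ξ : ℝ) (hξ : 0 < ξ) (hlow : psdLE (ξ⁻¹ • A) G)
    (τ : ℝ) (hτ : τ ∈ Set.Icc (0 : ℝ) 1) (u : Fin n → ℝ) (hu : u ≠ 0) :
    nuMeas A G u ^ 2 ≥
      (1 / (1 + ξ)) *
        (u ⬝ᵥ ((G - A) * (broyd τ A G u)⁻¹ * (G - A)).mulVec u) /
          (u ⬝ᵥ G.mulVec u) := by
  obtain ⟨hτ0, hτ1⟩ := hτ
  have hAs : Aᵀ = A := herm_transpose hA.1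
  have hGs : Gᵀ = G := herm_transpose hG.1
  have hGdet : IsUnit G.det := hG.det_pos.ne'.isUnit
  have hGG : G * G⁻¹ = 1 := mul_nonsing_inv G hGdet
  have hGG' : G⁻¹ * G = 1 := nonsing_inv_mul G hGdet
  set a : ℝ := u ⬝ᵥ A *ᵥ u with ha_def
  set g : ℝ := u ⬝ᵥ G *ᵥ u with hg_def
  have ha : 0 < a := by simpa using hA.dotProduct_mulVec_pos hu
  have hg : 0 < g := by simpa using hG.dotProduct_mulVec_pos hu
  set y : Fin n → ℝ := A *ᵥ u with hy_def
  set h : Fin n → ℝ := G⁻¹ *ᵥ y with hh_def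
  have hGh : G *ᵥ h = y := by rw [hh_def, mulVec_mulVec, hGG, one_mulVec]
  set q : ℝ := y ⬝ᵥ h with hq_def
  have hyne : y ≠ 0 := by
    intro h0
    exact ha.ne' (by rw [ha_def, h0, dotProduct_zero])
  have hq : 0 < q := by
    have := hG.inv.dotProduct_mulVec_pos hyne
    simpa [hq_def, hh_def] using this
  -- scalar facts
  have huGh : u ⬝ᵥ G *ᵥ h = a := by rw [hGh]
  have huAh : u ⬝ᵥ A *ᵥ h = q := by
    rw [dot_mulVec_symm hAs, hq_def, dotProduct_comm, hy_def]
  have hhy : h ⬝ᵥ y = q := by rw [hq_def, dotProduct_comm]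
  have hhGu : h ⬝ᵥ G *ᵥ u = a := by rw [dot_mulVec_symm hGs, huGh]
  have huy : u ⬝ᵥ y = a := rfl
  have hyu : y ⬝ᵥ u = a := by rw [dotProduct_comm]
  -- constraints
  have hlow' : ∀ x : Fin n → ℝ, ξ⁻¹ * (x ⬝ᵥ A *ᵥ x) ≤ x ⬝ᵥ G *ᵥ x := by
    intro x
    have := (show (G - ξ⁻¹ • A).PosSemidef from hlow).dotProduct_mulVec_nonneg x
    rw [star_trivial, sub_mulVec, dotProduct_sub, smul_mulVec, dotProduct_smul] at this
    simpa using this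
  have hag : a ≤ ξ * g := by
    have := hlow' u
    rw [← ha_def, ← hg_def] at this
    rw [← inv_mul_le_iff₀ hξ]
    linarith
  have hqa : q ≤ ξ * a := by
    have hb := quad_bound (M := ξ⁻¹ • A) (smul_posSemidef hA.posSemidef (by positivity)) h
      (w := ξ • u) (v := y) (by
        rw [smul_mulVec, mulVec_smul, ← hy_def, smul_smul, inv_mul_cancel₀ hξ.ne',
          one_smul])
    have h2 : h ⬝ᵥ (ξ⁻¹ • A) *ᵥ h = ξ⁻¹ * (h ⬝ᵥ A *ᵥ h) := by
      rw [smul_mulVec, dotProduct_smul, smul_eq_mul]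
    have h3 : ξ⁻¹ * (h ⬝ᵥ A *ᵥ h) ≤ h ⬝ᵥ G *ᵥ h := hlow' h
    have h4 : h ⬝ᵥ G *ᵥ h = q := by rw [hGh, hhy]
    have h5 : (ξ • u) ⬝ᵥ y = ξ * a := by rw [smul_dotProduct, smul_eq_mul, huy]
    rw [h2, h5] at hb
    linarith [hb, h3, h4]
  have hhGh : h ⬝ᵥ G *ᵥ h = q := by rw [hGh, hhy]
  have hqg : a ^ 2 ≤ q * g := by
    have h0 := hG.posSemidef.dotProduct_mulVec_nonneg (q • u - a • h)
    rw [star_trivial, quad_expand, ← hg_def, huGh, hhGu, hhGh] at h0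
    nlinarith [h0, hq]
  -- the two candidate updates
  set v : Fin n → ℝ := G *ᵥ u - y with hv_def
  set D : Matrix (Fin n) (Fin n) ℝ :=
    G - a⁻¹ • (A * vecMulVec u u * G + G * vecMulVec u u * A)
      + ((g / a + 1) / a) • (A * vecMulVec u u * A) with hD_def
  set B : Matrix (Fin n) (Fin n) ℝ :=
    G - g⁻¹ • (G * vecMulVec u u * G) + a⁻¹ • (A * vecMulVec u u * A) with hB_def
  set φ : ℝ := τ * (a / q) / (τ * (a / q) + (1 - τ) * (g / a)) with hφ_def
  have haga : u ⬝ᵥ (A * G⁻¹ * A) *ᵥ u = q := by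
    rw [← mulVec_mulVec, ← mulVec_mulVec, ← hy_def, ← hh_def, huAh]
  have hbroyd : broyd τ A G u = φ • D + (1 - φ) • B := by
    simp only [broyd, if_neg hu]
    rw [haga, ← ha_def, ← hg_def, hφ_def, hD_def, hB_def]
  -- symmetry of dot products against x
  have huAx : ∀ x, u ⬝ᵥ A *ᵥ x = y ⬝ᵥ x := fun x => by
    rw [dot_mulVec_symm hAs, ← hy_def, dotProduct_comm]
  -- action of D and B
  have hDact : ∀ x, D *ᵥ x = G *ᵥ x - (a⁻¹ * (u ⬝ᵥ G *ᵥ x)) • y - (a⁻¹ * (y ⬝ᵥ x)) • (G *ᵥ u)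
      + ((g / a + 1) / a * (y ⬝ᵥ x)) • y := by
    intro x
    rw [hD_def, add_mulVec, sub_mulVec, smul_mulVec, smul_mulVec, add_mulVec,
      triple_mulVec, triple_mulVec, triple_mulVec, huAx, ← hy_def]
    module
  have hBact : ∀ x, B *ᵥ x = G *ᵥ x - (g⁻¹ * (u ⬝ᵥ G *ᵥ x)) • (G *ᵥ u)
      + (a⁻¹ * (y ⬝ᵥ x)) • y := by
    intro x
    rw [hB_def, add_mulVec, sub_mulVec, smul_mulVec, smul_mulVec,
      triple_mulVec, triple_mulVec, huAx, ← hy_def]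
    module
  -- quadratic forms
  have hDquad : ∀ x, x ⬝ᵥ D *ᵥ x =
      (x - (a⁻¹ * (y ⬝ᵥ x)) • u) ⬝ᵥ G *ᵥ (x - (a⁻¹ * (y ⬝ᵥ x)) • u) + a⁻¹ * (y ⬝ᵥ x) ^ 2 := by
    intro x
    rw [hDact x, quad_expand₁]
    simp only [dotProduct_add, dotProduct_sub, dotProduct_smul, smul_eq_mul]
    rw [dot_mulVec_symm hGs x u, dotProduct_comm x y, ← hg_def]
    ring
  have hBquad : ∀ x, x ⬝ᵥ B *ᵥ x =
      (x - (g⁻¹ * (u ⬝ᵥ G *ᵥ x)) • u) ⬝ᵥ G *ᵥ (x - (g⁻¹ * (u ⬝ᵥ G *ᵥ x)) • u)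
        + a⁻¹ * (y ⬝ᵥ x) ^ 2 := by
    intro x
    rw [hBact x, quad_expand₁]
    simp only [dotProduct_add, dotProduct_sub, dotProduct_smul, smul_eq_mul]
    rw [dot_mulVec_symm hGs x u, dotProduct_comm x y, ← hg_def]
    field_simp
    ring
  -- positivity of the quadratic forms
  have hDpos : ∀ x, x ≠ 0 → 0 < x ⬝ᵥ D *ᵥ x := by
    intro x hx
    rw [hDquad x]
    rcases eq_or_ne (y ⬝ᵥ x) 0 with ht | ht
    · have hxx : x - (a⁻¹ * (y ⬝ᵥ x)) • u = x := by rw [ht, mul_zero, zero_smul, sub_zero]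
      rw [hxx, ht]
      have := hG.dotProduct_mulVec_pos hx
      rw [star_trivial] at this
      simpa using this
    · have h1 : 0 ≤ (x - (a⁻¹ * (y ⬝ᵥ x)) • u) ⬝ᵥ G *ᵥ (x - (a⁻¹ * (y ⬝ᵥ x)) • u) := by
        have := hG.posSemidef.dotProduct_mulVec_nonneg (x - (a⁻¹ * (y ⬝ᵥ x)) • u)
        rwa [star_trivial] at this
      have h2 : 0 < a⁻¹ * (y ⬝ᵥ x) ^ 2 := by positivity
      linarith
  have hBpos : ∀ x, x ≠ 0 → 0 < x ⬝ᵥ B *ᵥ x := by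
    intro x hx
    rw [hBquad x]
    by_cases hx' : x - (g⁻¹ * (u ⬝ᵥ G *ᵥ x)) • u = 0
    · have hxeq : x = (g⁻¹ * (u ⬝ᵥ G *ᵥ x)) • u := by
        have := sub_eq_zero.mp hx'
        exact this
      have htx : y ⬝ᵥ x = (g⁻¹ * (u ⬝ᵥ G *ᵥ x)) * a := by
        conv_lhs => rw [hxeq]
        rw [dotProduct_smul, smul_eq_mul, hyu]
      have hc : g⁻¹ * (u ⬝ᵥ G *ᵥ x) ≠ 0 := by
        intro h0
        exact hx (by rw [hxeq, h0, zero_smul])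
      have htne : y ⬝ᵥ x ≠ 0 := by
        rw [htx]
        exact mul_ne_zero hc ha.ne'
      rw [hx']
      have h2 : 0 < a⁻¹ * (y ⬝ᵥ x) ^ 2 := by positivity
      simpa using h2
    · have h1 : 0 < (x - (g⁻¹ * (u ⬝ᵥ G *ᵥ x)) • u) ⬝ᵥ G *ᵥ (x - (g⁻¹ * (u ⬝ᵥ G *ᵥ x)) • u) := by
        have := hG.dotProduct_mulVec_pos hx'
        rwa [star_trivial] at this
      have h2 : 0 ≤ a⁻¹ * (y ⬝ᵥ x) ^ 2 := by positivity
      linarith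
  -- symmetry of D and B
  have hvmvs : (vecMulVec u u)ᵀ = vecMulVec u u := by
    ext i j
    simp [vecMulVec_apply, mul_comm]
  have hDs : Dᵀ = D := by
    rw [hD_def]
    simp only [transpose_add, transpose_sub, transpose_smul, transpose_mul, hvmvs, hAs, hGs,
      Matrix.mul_assoc]
    abel
  have hBs : Bᵀ = B := by
    rw [hB_def]
    simp only [transpose_add, transpose_sub, transpose_smul, transpose_mul, hvmvs, hAs, hGs,
      Matrix.mul_assoc]
  have hDpd : D.PosDef := PosDef.of_dotProduct_mulVec_pos (transpose_herm hDs) fun x hx => by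
    rw [star_trivial]; exact hDpos x hx
  have hBpd : B.PosDef := PosDef.of_dotProduct_mulVec_pos (transpose_herm hBs) fun x hx => by
    rw [star_trivial]; exact hBpos x hx
  -- φ ∈ [0,1]
  have hden : 0 < τ * (a / q) + (1 - τ) * (g / a) := by
    rcases eq_or_lt_of_le hτ0 with h0 | h0
    · rw [← h0]
      simp only [zero_mul, zero_add, sub_zero, one_mul]
      positivity
    · have h1 : 0 < τ * (a / q) := by positivity
      have h2 : 0 ≤ (1 - τ) * (g / a) := by
        apply mul_nonneg (by linarith)
        positivity
      linarith
  have hφ0 : 0 ≤ φ := by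
    rw [hφ_def]
    apply div_nonneg _ hden.le
    positivity
  have hφ1 : φ ≤ 1 := by
    rw [hφ_def, div_le_one hden]
    have h2 : 0 ≤ (1 - τ) * (g / a) := by
      apply mul_nonneg (by linarith)
      positivity
    linarith
  -- positive definiteness of the update
  have hGppd : (φ • D + (1 - φ) • B).PosDef := by
    refine PosDef.of_dotProduct_mulVec_pos ?_ ?_
    · apply transpose_herm
      rw [transpose_add, transpose_smul, transpose_smul, hDs, hBs]
    · intro x hx
      rw [star_trivial, add_mulVec, smul_mulVec, smul_mulVec, dotProduct_add,
        dotProduct_smul, dotProduct_smul, smul_eq_mul, smul_eq_mul]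
      rcases eq_or_lt_of_le hφ1 with h1 | h1
      · rw [h1]
        simp only [sub_self, zero_mul, add_zero, one_mul]
        exact hDpos x hx
      · have h2 : 0 < (1 - φ) * (x ⬝ᵥ B *ᵥ x) := mul_pos (by linarith) (hBpos x hx)
        have h3 : 0 ≤ φ * (x ⬝ᵥ D *ᵥ x) := mul_nonneg hφ0 (hDpos x hx).le
        linarith
  have hGpinv : (φ • D + (1 - φ) • B) * (φ • D + (1 - φ) • B)⁻¹ = 1 :=
    mul_nonsing_inv _ hGppd.det_pos.ne'.isUnit
  -- the vectors wD and wB mapped to v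
  set wD : Fin n → ℝ := (g / a) • u - (a / q) • h with hwD_def
  set wB : Fin n → ℝ := (g * (q + a) / (a * a) - 1) • u - (g / a) • h with hwB_def
  have hGwD : G *ᵥ wD = (g / a) • (G *ᵥ u) - (a / q) • y := by
    rw [hwD_def, mulVec_sub, mulVec_smul, mulVec_smul, hGh]
  have hGwB : G *ᵥ wB = (g * (q + a) / (a * a) - 1) • (G *ᵥ u) - (g / a) • y := by
    rw [hwB_def, mulVec_sub, mulVec_smul, mulVec_smul, hGh]
  have hs_wD : u ⬝ᵥ G *ᵥ wD = (g / a) * g - (a / q) * a := by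
    rw [hGwD, dotProduct_sub, dotProduct_smul, dotProduct_smul, ← hg_def, ← ha_def,
      smul_eq_mul, smul_eq_mul]
  have hs_wB : u ⬝ᵥ G *ᵥ wB = (g * (q + a) / (a * a) - 1) * g - (g / a) * a := by
    rw [hGwB, dotProduct_sub, dotProduct_smul, dotProduct_smul, ← hg_def, ← ha_def,
      smul_eq_mul, smul_eq_mul]
  have ht_wD : y ⬝ᵥ wD = (g / a) * a - (a / q) * q := by
    rw [hwD_def, dotProduct_sub, dotProduct_smul, dotProduct_smul, hyu, ← hq_def,
      smul_eq_mul, smul_eq_mul]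
  have ht_wB : y ⬝ᵥ wB = (g * (q + a) / (a * a) - 1) * a - (g / a) * q := by
    rw [hwB_def, dotProduct_sub, dotProduct_smul, dotProduct_smul, hyu, ← hq_def,
      smul_eq_mul, smul_eq_mul]
  have hwD : D *ᵥ wD = v := by
    rw [hDact wD, hs_wD, ht_wD, hGwD, hv_def]
    match_scalars
    · field_simp
      ring
    · field_simp
      ring
  have hwB : B *ᵥ wB = v := by
    rw [hBact wB, hs_wB, ht_wB, hGwB, hv_def]
    match_scalars
    · field_simp
      ring
    · field_simp
      ring
  -- values of the bounds
  have huv : u ⬝ᵥ v = g - a := by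
    rw [hv_def, dotProduct_sub, ← hg_def, ← ha_def]
  have hhv : h ⬝ᵥ v = a - q := by
    rw [hv_def, dotProduct_sub, hhGu, hhy]
  have hWD : wD ⬝ᵥ v = (g / a) * (g - a) - (a / q) * (a - q) := by
    rw [hwD_def, sub_dotProduct, smul_dotProduct, smul_dotProduct, huv, hhv,
      smul_eq_mul, smul_eq_mul]
  have hWB : wB ⬝ᵥ v = (g * (q + a) / (a * a) - 1) * (g - a) - (g / a) * (a - q) := by
    rw [hwB_def, sub_dotProduct, smul_dotProduct, smul_dotProduct, huv, hhv,
      smul_eq_mul, smul_eq_mul]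
  -- rewrite the goal
  have hGAs : (G - A)ᵀ = G - A := by rw [transpose_sub, hAs, hGs]
  have hGAu : (G - A) *ᵥ u = v := by rw [sub_mulVec, ← hy_def, hv_def]
  set x0 : Fin n → ℝ := (φ • D + (1 - φ) • B)⁻¹ *ᵥ v with hx0_def
  have hN : u ⬝ᵥ ((G - A) * (φ • D + (1 - φ) • B)⁻¹ * (G - A)) *ᵥ u = x0 ⬝ᵥ v := by
    rw [← mulVec_mulVec, ← mulVec_mulVec, hGAu, ← hx0_def, dot_mulVec_symm hGAs, hGAu]
  have hx0v : (φ • D + (1 - φ) • B) *ᵥ x0 = v := by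
    rw [hx0_def, mulVec_mulVec, hGpinv, one_mulVec]
  -- the key bound
  have hkey : x0 ⬝ᵥ v ≤ φ * (wD ⬝ᵥ v) + (1 - φ) * (wB ⬝ᵥ v) := by
    have hquadD := quad_bound hDpd.posSemidef x0 hwD
    have hquadB := quad_bound hBpd.posSemidef x0 hwB
    have hsplit : x0 ⬝ᵥ (φ • D + (1 - φ) • B) *ᵥ x0 =
        φ * (x0 ⬝ᵥ D *ᵥ x0) + (1 - φ) * (x0 ⬝ᵥ B *ᵥ x0) := by
      rw [add_mulVec, smul_mulVec, smul_mulVec, dotProduct_add,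
        dotProduct_smul, dotProduct_smul, smul_eq_mul, smul_eq_mul]
    have hid : x0 ⬝ᵥ (φ • D + (1 - φ) • B) *ᵥ x0 = x0 ⬝ᵥ v := by rw [hx0v]
    have e1 := mul_le_mul_of_nonneg_left hquadD hφ0
    have e2 := mul_le_mul_of_nonneg_left hquadB (by linarith : (0:ℝ) ≤ 1 - φ)
    nlinarith [e1, e2, hsplit, hid]
  -- scalar bounds
  have hWDC : (g / a) * (g - a) - (a / q) * (a - q) ≤ (1 + ξ) * g * (q - 2 * a + g) / a := by
    have hcore := coreD ha hg hq hξ hqg hqa hag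
    rw [show (g / a) * (g - a) - (a / q) * (a - q)
        = (g * q * (g - a) + a * a * q - a * a * a) / (a * q) by field_simp; ring,
      show (1 + ξ) * g * (q - 2 * a + g) / a
        = ((1 + ξ) * g * q * (q - 2 * a + g)) / (a * q) by
          rw [div_eq_div_iff (by positivity) (by positivity)]; ring]
    exact (div_le_div_iff_of_pos_right (by positivity)).2 hcore
  have hWBC : (g * (q + a) / (a * a) - 1) * (g - a) - (g / a) * (a - q)
      ≤ (1 + ξ) * g * (q - 2 * a + g) / a := by
    have hcore := coreB ha hg hq hξ hqg hqa hag
    rw [show (g * (q + a) / (a * a) - 1) * (g - a) - (g / a) * (a - q)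
        = (g * g * q + a * g * g - 3 * a * a * g + a * a * a) / (a * a) by field_simp; ring,
      show (1 + ξ) * g * (q - 2 * a + g) / a
        = ((1 + ξ) * a * g * (q - 2 * a + g)) / (a * a) by
          rw [div_eq_div_iff (by positivity) (by positivity)]; ring]
    exact (div_le_div_iff_of_pos_right (by positivity)).2 hcore
  -- combining
  have hfin : x0 ⬝ᵥ v ≤ (1 + ξ) * g * (q - 2 * a + g) / a := by
    have e1 := mul_le_mul_of_nonneg_left hWDC hφ0
    have e2 := mul_le_mul_of_nonneg_left hWBC (by linarith : (0:ℝ) ≤ 1 - φ)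
    rw [hWD] at hkey
    rw [hWB] at hkey
    linarith [e1, e2, hkey]
  -- the value of nuMeas
  have hGiv : G⁻¹ *ᵥ v = u - h := by
    rw [hv_def, mulVec_sub, mulVec_mulVec, hGG', one_mulVec, ← hh_def]
  have hnum : u ⬝ᵥ ((G - A) * G⁻¹ * (G - A)) *ᵥ u = q - 2 * a + g := by
    rw [← mulVec_mulVec, ← mulVec_mulVec, hGAu, dot_mulVec_symm hGAs, hGAu, hGiv,
      sub_dotProduct, hv_def, dotProduct_sub, dotProduct_sub]
    rw [← hg_def, huy, hhGu, hhy]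
    ring
  have hpos2 : 0 ≤ q - 2 * a + g := by nlinarith [hqg, sq_nonneg (q - g), hq, hg, ha]
  have hnu : nuMeas A G u ^ 2 = (q - 2 * a + g) / a := by
    simp only [nuMeas]
    rw [hnum, ← ha_def]
    exact Real.sq_sqrt (div_nonneg hpos2 ha.le)
  -- final computation
  rw [hbroyd, hnu, ge_iff_le, hN]
  clear_value x0 wB wD φ B D v q h y g a
  have h1ξ : (0:ℝ) < 1 + ξ := by linarith
  clear * - h1ξ hfin hg ha hξ hpos2
  set z : ℝ := x0 ⬝ᵥ v with hz_def
  calc 1 / (1 + ξ) * z / g ≤ 1 / (1 + ξ) * ((1 + ξ) * g * (q - 2 * a + g) / a) / g := by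
        gcongr
    _ = (q - 2 * a + g) / a := by field_simp
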